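/- Let t be a selfadjoint regular operator on a Hilbert C*-module E. Then the operator F_t - i Q_t is a unitary element of the bounded adjointable operators L(E), where F_t = t(1+t^2)^{-1/2} and Q_t = (1+t^2)^{-1/2}. -/

import Mathlib

/-! Framework: unbounded (regular) operators on Hilbert C⋆-modules, bounded adjointable
operators, compact operators, Fredholm operators, Cayley and bounded transforms. -/

open scoped RightActions InnerProductSpace

noncomputable section

namespace RegularFredholm

/-- An unbounded operator on `E`: a (not necessarily closed) domain together with a
linear map into `E`. -/
structure UnboundedOp (A : Type*) [NonUnitalCStarAlgebra A] [PartialOrder A]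
    [StarOrderedRing A] (E : Type*) [NormedAddCommGroup E] [NormedSpace ℂ E]
    [SMul Aᵐᵒᵖ E] [CStarModule Aᵐᵒᵖ E] where
  dom : Submodule ℂ E
  toFun : dom →ₗ[ℂ] E

section Defs

variable {A : Type*} [NonUnitalCStarAlgebra A] [PartialOrder A] [StarOrderedRing A]
variable {E : Type*} [NormedAddCommGroup E] [NormedSpace ℂ E] [SMul Aᵐᵒᵖ E] [CStarModule Aᵐᵒᵖ E]

namespace UnboundedOp

variable (t s : UnboundedOp A E)

/-- Application of an unbounded operator at a point of its domain. -/
def app (x : E) (hx : x ∈ t.dom) : E := t.toFun ⟨x, hx⟩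

/-- `t` is densely defined. -/
def DenselyDefined : Prop := Dense (t.dom : Set E)

/-- The graph of `t` as a subset of `E × E`. -/
def graph : Set (E × E) := {p | ∃ hx : p.1 ∈ t.dom, t.app p.1 hx = p.2}

/-- `t` is a closed operator. -/
def IsClosedOp : Prop := IsClosed t.graph

/-- `t'` is the adjoint of `t`: it is a formal adjoint which is maximal among formal
adjoints. -/
def IsAdjoint (t' : UnboundedOp A E) : Prop :=
  (∀ x (hx : x ∈ t.dom) y (hy : y ∈ t'.dom),
      (MulOpposite.unop ⟪t.app x hx, y⟫_(Aᵐᵒᵖ) : A) = MulOpposite.unop ⟪x, t'.app y hy⟫_(Aᵐᵒᵖ)) ∧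
  ∀ y z : E, (∀ x (hx : x ∈ t.dom), (MulOpposite.unop ⟪t.app x hx, y⟫_(Aᵐᵒᵖ) : A) = MulOpposite.unop ⟪x, z⟫_(Aᵐᵒᵖ)) →
    ∃ hy : y ∈ t'.dom, t'.app y hy = z

/-- `t` is a regular operator with adjoint `t'`: it is closed, densely defined, has
densely defined adjoint `t'`, and `1 + t'∘t` (i.e. `1 + t⋆t`) has dense range. -/
def IsRegularPair (t' : UnboundedOp A E) : Prop :=
  t.DenselyDefined ∧ t.IsClosedOp ∧ t.IsAdjoint t' ∧ t'.DenselyDefined ∧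
    Dense {y : E | ∃ (x : E) (hx : x ∈ t.dom) (hx' : t.app x hx ∈ t'.dom),
      y = x + t'.app (t.app x hx) hx'}

/-- `t` is a selfadjoint regular operator. -/
def IsSelfAdjointRegular : Prop := t.IsRegularPair t

/-- The sum of an unbounded operator and a bounded operator, with the same domain. -/
def addBounded (D : E →L[ℂ] E) : UnboundedOp A E where
  dom := t.dom
  toFun := t.toFun + (D : E →ₗ[ℂ] E) ∘ₗ t.dom.subtype

/-- The sum of two unbounded operators, with domain the intersection of the domains. -/
def add : UnboundedOp A E where
  dom := t.dom ⊓ s.dom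
  toFun := t.toFun ∘ₗ Submodule.inclusion inf_le_left +
    s.toFun ∘ₗ Submodule.inclusion inf_le_right

/-- A bounded operator regarded as an unbounded operator with full domain. -/
def ofCLM (T : E →L[ℂ] E) : UnboundedOp A E where
  dom := ⊤
  toFun := (T : E →ₗ[ℂ] E) ∘ₗ (⊤ : Submodule ℂ E).subtype

/-- `R` is the (two-sided) inverse of `t + c` for a scalar `c`, i.e. `R = (t + c)⁻¹`. -/
def IsResolvent (c : ℂ) (R : E →L[ℂ] E) : Prop :=
  (∀ x : E, ∃ h : R x ∈ t.dom, t.app (R x) h + c • R x = x) ∧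
  ∀ x (hx : x ∈ t.dom), R (t.app x hx + c • x) = x

/-- `R` is the (two-sided) inverse of `1 + t'∘t`, i.e. `R = (1 + t⋆t)⁻¹`
(for `t` with adjoint `t'`). -/
def IsResolventSq (t' : UnboundedOp A E) (R : E →L[ℂ] E) : Prop :=
  (∀ x : E, ∃ (h : R x ∈ t.dom) (h' : t.app (R x) h ∈ t'.dom),
      t'.app (t.app (R x) h) h' + R x = x) ∧
  ∀ x (hx : x ∈ t.dom) (hx' : t.app x hx ∈ t'.dom),
    R (x + t'.app (t.app x hx) hx') = x

/-- `C` is the Cayley transform of `t`, namely `C = (t - i)(t + i)⁻¹`. -/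
def IsCayley (C : E →L[ℂ] E) : Prop :=
  ∃ R : E →L[ℂ] E, t.IsResolvent Complex.I R ∧
    ∀ x : E, ∃ h : R x ∈ t.dom, C x = t.app (R x) h - Complex.I • R x

/-- `Q` is the operator `(1 + t⋆t)^(-1/2)` (with `t'` the adjoint of `t`): `Q` is a
positive selfadjoint bounded operator whose square is the inverse of `1 + t'∘t`. -/
def IsSqrtResolvent (t' : UnboundedOp A E) (Q : E →L[ℂ] E) : Prop :=
  (∀ x y : E, (MulOpposite.unop ⟪Q x, y⟫_(Aᵐᵒᵖ) : A) = MulOpposite.unop ⟪x, Q y⟫_(Aᵐᵒᵖ)) ∧ (∀ x : E, (0 : A) ≤ MulOpposite.unop ⟪x, Q x⟫_(Aᵐᵒᵖ)) ∧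
    t.IsResolventSq t' (Q.comp Q)

/-- `F` is the bounded transform `t ∘ Q` of `t`, where `Q = (1 + t⋆t)^(-1/2)`. -/
def IsBoundedTransform (Q F : E →L[ℂ] E) : Prop :=
  ∀ x : E, ∃ h : Q x ∈ t.dom, F x = t.app (Q x) h

end UnboundedOp

end Defs

section BoundedDefs

variable (A : Type*) [NonUnitalCStarAlgebra A] [PartialOrder A] [StarOrderedRing A]
variable {E : Type*} [NormedAddCommGroup E] [NormedSpace ℂ E] [SMul Aᵐᵒᵖ E] [CStarModule Aᵐᵒᵖ E]

/-- `S` is an adjoint for the bounded operator `T`. -/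
def IsAdjointableB (T S : E →L[ℂ] E) : Prop :=
  ∀ x y : E, (MulOpposite.unop ⟪T x, y⟫_(Aᵐᵒᵖ) : A) = MulOpposite.unop ⟪x, S y⟫_(Aᵐᵒᵖ)

/-- `T` is a bounded adjointable operator. -/
def Adjointable (T : E →L[ℂ] E) : Prop := ∃ S : E →L[ℂ] E, IsAdjointableB A T S

/-- `T` is a "rank one" operator `θ_{x,y} : z ↦ x • ⟪y, z⟫`. -/
def IsRankOne (T : E →L[ℂ] E) : Prop :=
  ∃ x y : E, ∀ z : E, T z = x <• (MulOpposite.unop ⟪y, z⟫_(Aᵐᵒᵖ) : A)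

/-- `T` is a compact operator: it belongs to the closed linear span of the rank one
operators. -/
def IsCompactOp (T : E →L[ℂ] E) : Prop :=
  T ∈ closure (Submodule.span ℂ {S : E →L[ℂ] E | IsRankOne A S} : Set (E →L[ℂ] E))

/-- `T` is a Fredholm bounded adjointable operator: `T` is adjointable and invertible
modulo the compact operators. -/
def IsFredholmB (T : E →L[ℂ] E) : Prop :=
  Adjointable A T ∧ ∃ G : E →L[ℂ] E, Adjointable A G ∧
    IsCompactOp A (G * T - 1) ∧ IsCompactOp A (T * G - 1)

/-- `U` is a unitary element of the bounded adjointable operators. -/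
def IsUnitaryB (U : E →L[ℂ] E) : Prop :=
  ∃ U' : E →L[ℂ] E, IsAdjointableB A U U' ∧ U' * U = 1 ∧ U * U' = 1

end BoundedDefs

section MoreDefs

variable {A : Type*} [NonUnitalCStarAlgebra A] [PartialOrder A] [StarOrderedRing A]
variable {E : Type*} [NormedAddCommGroup E] [NormedSpace ℂ E] [SMul Aᵐᵒᵖ E] [CStarModule Aᵐᵒᵖ E]

/-- A regular operator `t` (with adjoint `t'`) is Fredholm if its bounded transform
`F_t = t (1 + t⋆t)^(-1/2)` is a Fredholm bounded adjointable operator. -/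
def UnboundedOp.IsFredholm (t t' : UnboundedOp A E) : Prop :=
  ∃ Q F : E →L[ℂ] E, t.IsSqrtResolvent t' Q ∧ t.IsBoundedTransform Q F ∧ IsFredholmB A F

/-- `s` is relatively `t`-compact: the map `s : E(t) → E`, where `E(t)` is the domain of
`t` equipped with the graph inner product `⟪x,y⟫ + ⟪t x, t y⟫`, lies in the closed linear
span of the rank one operators `E(t) → E`; i.e. it can be approximated, in the operator
norm for maps `E(t) → E`, by finite sums of operators
`θ_{x,y} : z ↦ x • (⟪y, z⟫ + ⟪t y, t z⟫)` with `x ∈ E`, `y ∈ E(t)`. -/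
def IsRelativelyCompact (t s : UnboundedOp A E) (hsub : t.dom ≤ s.dom) : Prop :=
  ∀ ε > (0 : ℝ), ∃ (n : ℕ) (x : Fin n → E) (y : Fin n → E) (hy : ∀ i, y i ∈ t.dom),
    ∀ z (hz : z ∈ t.dom),
      ‖s.app z (hsub hz) - ∑ i, x i <•
          ((MulOpposite.unop ⟪y i, z⟫_(Aᵐᵒᵖ) : A) + MulOpposite.unop ⟪t.app (y i) (hy i), t.app z hz⟫_(Aᵐᵒᵖ))‖ ≤
        ε * Real.sqrt ‖(MulOpposite.unop ⟪z, z⟫_(Aᵐᵒᵖ) : A) + MulOpposite.unop ⟪t.app z hz, t.app z hz⟫_(Aᵐᵒᵖ)‖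

/-- The graph of `t` inside the Hilbert C⋆-module `E ⊕ E`. -/
def graphSet (t : UnboundedOp A E) : Set (WithCStarModule Aᵐᵒᵖ (E × E)) :=
  {p | ∃ hx : (WithCStarModule.equiv Aᵐᵒᵖ (E × E) p).1 ∈ t.dom,
    t.app (WithCStarModule.equiv Aᵐᵒᵖ (E × E) p).1 hx = (WithCStarModule.equiv Aᵐᵒᵖ (E × E) p).2}

/-- `P` is the orthogonal projection of `E ⊕ E` onto the graph of `t`: a selfadjoint
idempotent whose range is the graph of `t`.  The gap metric between regular operators
`t`, `s` is `‖P_{G(t)} - P_{G(s)}‖` for the associated graph projections. -/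
def IsGraphProjection (t : UnboundedOp A E)
    (P : WithCStarModule Aᵐᵒᵖ (E × E) →L[ℂ] WithCStarModule Aᵐᵒᵖ (E × E)) : Prop :=
  IsAdjointableB A P P ∧ P * P = P ∧ Set.range P = graphSet t

end MoreDefs

variable {A : Type*} [NonUnitalCStarAlgebra A] [PartialOrder A] [StarOrderedRing A]
variable {E : Type*} [NormedAddCommGroup E] [NormedSpace ℂ E] [SMul Aᵐᵒᵖ E] [CStarModule Aᵐᵒᵖ E]

section AuxiliaryLemmas
set_option linter.unusedSectionVars false
set_option maxHeartbeats 1000000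

variable {A : Type*} [NonUnitalCStarAlgebra A] [PartialOrder A] [StarOrderedRing A]
variable {E : Type*} [NormedAddCommGroup E] [NormedSpace ℂ E] [SMul A E] [CStarModule A E]


/-- Separation: vectors are determined by inner products. -/
lemma ext_inner {x y : E} (h : ∀ z : E, (⟪z, x⟫_A : A) = ⟪z, y⟫_A) : x = y := by
  have h2 : (⟪x - y, x - y⟫_A : A) = 0 := by
    have := h (x - y)
    simp only [CStarModule.inner_sub_right]
    rw [this]; abel
  exact sub_eq_zero.mp (CStarModule.inner_self (A := A) (x := x - y) |>.mp h2)

/-- Polarization: an operator with vanishing quadratic form is zero. -/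
lemma eq_zero_of_form_zero (T : E →L[ℂ] E) (h : ∀ x : E, (⟪x, T x⟫_A : A) = 0) :
    ∀ x : E, T x = 0 := by
  have key : ∀ x y : E, (⟪x, T y⟫_A : A) = 0 := by
    intro x y
    have h1 : (⟪x, T y⟫_A : A) + ⟪y, T x⟫_A = 0 := by
      have := h (x + y)
      simp only [map_add, CStarModule.inner_add_right, CStarModule.inner_add_left,
        h x, h y] at this
      rw [← this]; abel
    have h2 : (⟪x, T y⟫_A : A) = ⟪y, T x⟫_A := by
      have := h (x + Complex.I • y)
      simp only [map_add, map_smul, CStarModule.inner_add_right, CStarModule.inner_add_left,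
        CStarModule.inner_smul_right_complex, CStarModule.inner_smul_left_complex, h x, h y,
        smul_zero, add_zero, zero_add, smul_smul, Complex.star_def, Complex.conj_I] at this
      -- this : I • ⟪x,Ty⟫ + (-I) • ⟪y,Tx⟫ = 0  (in some arrangement)
      have h3 : Complex.I • ((⟪x, T y⟫_A : A) - ⟪y, T x⟫_A) = 0 := by
        rw [smul_sub, sub_eq_add_neg, ← neg_smul]
        rw [← this]; abel
      have h4 := congrArg (fun a => (Complex.I)⁻¹ • a) h3
      simp only [smul_smul, inv_mul_cancel₀ Complex.I_ne_zero, one_smul, smul_zero] at h4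
      exact sub_eq_zero.mp h4
    have h5 : (⟪x, T y⟫_A : A) + ⟪x, T y⟫_A = 0 := by rw [h2] at h1 ⊢; exact h1
    have h6 : (2:ℝ) • (⟪x, T y⟫_A : A) = 0 := by rw [two_smul]; exact h5
    have h7 := congrArg (fun a => (2:ℝ)⁻¹ • a) h6
    simpa [smul_smul] using h7
  intro x
  refine ext_inner (A := A) (fun z => ?_)
  simp [key z x]



noncomputable def iterOp (S : E →L[ℂ] E) : ℕ → E →L[ℂ] E
  | 0 => S
  | n+1 => iterOp S n - (iterOp S n).comp (iterOp S n)

noncomputable def bSeq : ℕ → ℝ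
  | 0 => 1/4
  | n+1 => bSeq n * (1 - bSeq n)

lemma bSeq_succ (n : ℕ) : bSeq (n+1) = bSeq n * (1 - bSeq n) := rfl

lemma bSeq_mem : ∀ n : ℕ, 0 < bSeq n ∧ bSeq n ≤ 1/4 := by
  intro n
  induction n with
  | zero => norm_num [bSeq]
  | succ n ih =>
    rw [bSeq_succ]
    constructor
    · exact mul_pos ih.1 (by linarith [ih.2])
    · nlinarith [ih.1, ih.2]

lemma bSeq_le_inv : ∀ n : ℕ, bSeq n ≤ 1/((n:ℝ)+4) := by
  intro n
  induction n with
  | zero => norm_num [bSeq]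
  | succ n ih =>
    obtain ⟨h1, h2⟩ := bSeq_mem n
    have hn : (0:ℝ) ≤ (n:ℝ) := Nat.cast_nonneg n
    have hc : (0:ℝ) < (n:ℝ)+4 := by linarith
    have hc5 : (0:ℝ) < (n:ℝ)+5 := by linarith
    set b : ℝ := bSeq n with hb
    set c : ℝ := 1/((n:ℝ)+4) with hcdef
    have hc14 : c ≤ 1/4 := by
      rw [hcdef, div_le_div_iff₀ hc (by norm_num)]; linarith
    have hc0 : 0 < c := by positivity
    have e1 : 0 ≤ (c - b)*(1 - b - c) := mul_nonneg (by linarith) (by linarith)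
    have hprod : c * ((n:ℝ)+4) = 1 := by
      rw [hcdef]; field_simp
    have e2 : c*(1-c) ≤ 1/((n:ℝ)+5) := by
      rw [le_div_iff₀ hc5]
      nlinarith [hprod, sq_nonneg c]
    have id1 : b*(1-b) = c*(1-c) - (c-b)*(1-b-c) := by ring
    rw [bSeq_succ, ← hb]
    push_cast
    have : (n:ℝ)+1+4 = (n:ℝ)+5 := by ring
    rw [this]
    linarith

lemma bSeq_tendsto : Filter.Tendsto bSeq Filter.atTop (nhds 0) := by
  refine squeeze_zero (fun n => (bSeq_mem n).1.le) (fun n => bSeq_le_inv n) ?_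
  have h1 : Filter.Tendsto (fun n : ℕ => (n:ℝ)+4) Filter.atTop Filter.atTop :=
    Filter.tendsto_atTop_add_const_right _ 4 tendsto_natCast_atTop_atTop
  simpa [one_div, Pi.inv_def] using h1.inv_tendsto_atTop

/-- Key positivity step: if `0 ≤ T ≤ 1` (as forms) then `T - T²` is form-nonneg. -/
lemma posStep (T : E →L[ℂ] E) (hsym : ∀ x y : E, (⟪T x, y⟫_A : A) = ⟪x, T y⟫_A)
    (hpos : ∀ x : E, (0:A) ≤ ⟪x, T x⟫_A) (hub : ∀ x : E, (⟪x, T x⟫_A : A) ≤ ⟪x, x⟫_A)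
    (x : E) : (0:A) ≤ ⟪x, T x - T (T x)⟫_A := by
  have e1 : (⟪x, T x - T (T x)⟫_A : A)
      = ⟪x - T x, T (x - T x)⟫_A + (⟪T x, T x⟫_A - ⟪T x, T (T x)⟫_A) := by
    simp only [map_sub, CStarModule.inner_sub_left, CStarModule.inner_sub_right, hsym]
    abel
  rw [e1]
  exact add_nonneg (hpos _) (sub_nonneg.mpr (hub (T x)))

/-- If two commuting form-nonnegative symmetric operators (one of them form-bounded by `1`)
commute, their product is form-nonnegative. -/
lemma formPos_comp (S B : E →L[ℂ] E)
    (hSsym : ∀ x y : E, (⟪S x, y⟫_A : A) = ⟪x, S y⟫_A)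
    (hS0 : ∀ x : E, (0:A) ≤ ⟪x, S x⟫_A)
    (hS1 : ∀ x : E, (⟪x, S x⟫_A : A) ≤ ⟪x, x⟫_A)
    (hB0 : ∀ x : E, (0:A) ≤ ⟪x, B x⟫_A)
    (hcomm : ∀ x : E, S (B x) = B (S x)) :
    ∀ x : E, (0:A) ≤ ⟪x, S (B x)⟫_A := by
  have hsymA : ∀ n (x y : E), (⟪(iterOp S n) x, y⟫_A : A) = ⟪x, (iterOp S n) y⟫_A := by
    intro n
    induction n with
    | zero => exact hSsym
    | succ n ih =>
      intro x y
      simp only [iterOp, ContinuousLinearMap.sub_apply, ContinuousLinearMap.comp_apply,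
        CStarModule.inner_sub_left, CStarModule.inner_sub_right, ih]
  have hcommA : ∀ n (x : E), (iterOp S n) (B x) = B ((iterOp S n) x) := by
    intro n
    induction n with
    | zero => exact hcomm
    | succ n ih =>
      intro x
      simp only [iterOp, ContinuousLinearMap.sub_apply, ContinuousLinearMap.comp_apply, ih,
        map_sub]
  -- form bounds for the iterates
  have inv : ∀ n, (∀ x : E, (0:A) ≤ ⟪x, iterOp S (n+1) x⟫_A) ∧
      (∀ x : E, (⟪x, iterOp S (n+1) x⟫_A : A) ≤ bSeq n • ⟪x, x⟫_A) := by
    intro n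
    induction n with
    | zero =>
      constructor
      · intro x
        have h : iterOp S 1 x = S x - S (S x) := by simp [iterOp]
        rw [h]
        exact posStep (T := S) hSsym hS0 hS1 x
      · intro x
        set m : E := (2⁻¹:ℝ) • x - S x with hm
        have hexp : (⟪m, m⟫_A : A)
            = (4⁻¹:ℝ) • ⟪x, x⟫_A - (⟪x, S x⟫_A - ⟪x, S (S x)⟫_A) := by
          simp only [hm, map_sub, ContinuousLinearMap.map_smul_of_tower,
            CStarModule.inner_sub_left, CStarModule.inner_sub_right,
            CStarModule.inner_smul_left_real, CStarModule.inner_smul_right_real, hSsym,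
            smul_smul]
          norm_num
          module
        have h0 : (0:A) ≤ ⟪m, m⟫_A := CStarModule.inner_self_nonneg
        rw [hexp] at h0
        have h1 : (⟪x, iterOp S 1 x⟫_A : A) = ⟪x, S x⟫_A - ⟪x, S (S x)⟫_A := by
          simp [iterOp]
        have h2 : bSeq 0 = (4⁻¹:ℝ) := by norm_num [bSeq]
        rw [h1, h2]
        exact sub_nonneg.mp h0
    | succ n ih =>
      obtain ⟨hpos, hub⟩ := ih
      obtain ⟨ha0, ha4⟩ := bSeq_mem n
      set a : ℝ := bSeq n with hadef
      set T : E →L[ℂ] E := iterOp S (n+1) with hT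
      have hsymT : ∀ x y : E, (⟪T x, y⟫_A : A) = ⟪x, T y⟫_A := hsymA (n+1)
      have hub1 : ∀ x : E, (⟪x, T x⟫_A : A) ≤ ⟪x, x⟫_A := by
        intro x
        refine (hub x).trans ?_
        have h3 : (0:A) ≤ (1 - a) • ⟪x, x⟫_A :=
          smul_nonneg (by linarith) CStarModule.inner_self_nonneg
        have e : (1 - a) • (⟪x, x⟫_A : A) = ⟪x, x⟫_A - a • ⟪x, x⟫_A := by module
        rw [e] at h3
        exact sub_nonneg.mp h3
      constructor
      · intro x
        have h : iterOp S (n+2) x = T x - T (T x) := by simp [iterOp, hT]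
        rw [h]
        exact posStep T hsymT hpos hub1 x
      · intro x
        set M : E := a • x - T x with hM
        have hrec : bSeq (n+1) = a * (1 - a) := rfl
        have hexp : bSeq (n+1) • (⟪x, x⟫_A : A) - (⟪x, T x⟫_A - ⟪x, T (T x)⟫_A)
            = (1 - 2*a) • (a • ⟪x, x⟫_A - ⟪x, T x⟫_A) + ⟪M, M⟫_A := by
          simp only [hM, hrec, map_sub, ContinuousLinearMap.map_smul_of_tower,
            CStarModule.inner_sub_left, CStarModule.inner_sub_right,
            CStarModule.inner_smul_left_real, CStarModule.inner_smul_right_real, hsymT,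
            smul_sub, smul_smul]
          module
        have h0 : (0:A) ≤ (1 - 2*a) • (a • ⟪x, x⟫_A - ⟪x, T x⟫_A) + ⟪M, M⟫_A :=
          add_nonneg (smul_nonneg (by linarith) (sub_nonneg.mpr (hub x)))
            CStarModule.inner_self_nonneg
        rw [← hexp] at h0
        have h1 : (⟪x, iterOp S (n+2) x⟫_A : A) = ⟪x, T x⟫_A - ⟪x, T (T x)⟫_A := by
          simp [iterOp, hT]
        rw [h1]
        exact sub_nonneg.mp h0
  -- norm decay of the iterates
  have hnorm : ∀ n (y : E), ‖iterOp S (n+1) y‖ ≤ bSeq n * ‖y‖ := by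
    intro n y
    obtain ⟨hpos, hub⟩ := inv n
    obtain ⟨ha0, ha4⟩ := bSeq_mem n
    set a : ℝ := bSeq n with hadef
    set T : E →L[ℂ] E := iterOp S (n+1) with hT
    have hsymT : ∀ x y : E, (⟪T x, y⟫_A : A) = ⟪x, T y⟫_A := hsymA (n+1)
    have hp : (0:A) ≤ ⟪T y, a • y - T y⟫_A := by
      set M : E := a • y - T y with hM
      have e : a • (⟪T y, a • y - T y⟫_A : A)
          = ⟪M, T M⟫_A + (a • (⟪T y, T y⟫_A : A) - ⟪T y, T (T y)⟫_A) := by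
        simp only [hM, map_sub, ContinuousLinearMap.map_smul_of_tower,
          CStarModule.inner_sub_left, CStarModule.inner_sub_right,
          CStarModule.inner_smul_left_real, CStarModule.inner_smul_right_real, hsymT,
          smul_sub, smul_smul]
        module
      have h6 : (0:A) ≤ a • (⟪T y, T y⟫_A : A) - ⟪T y, T (T y)⟫_A := by
        have h7 := hub (T y)
        have e7 : (⟪T y, a • (T y) - T (T y)⟫_A : A)
            = a • (⟪T y, T y⟫_A : A) - ⟪T y, T (T y)⟫_A := by
          simp only [CStarModule.inner_sub_right, CStarModule.inner_smul_right_real]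
        rw [← e7]
        have h8 : (⟪T y, T (T y)⟫_A : A) ≤ a • ⟪T y, T y⟫_A := hub (T y)
        rw [e7]
        exact sub_nonneg.mpr h8
      have h9 : (0:A) ≤ a • (⟪T y, a • y - T y⟫_A : A) := by
        rw [e]; exact add_nonneg (hpos M) h6
      have h10 := smul_nonneg (inv_nonneg.mpr ha0.le) h9
      rwa [smul_smul, inv_mul_cancel₀ ha0.ne', one_smul] at h10
    have hT2 : (⟪T y, T y⟫_A : A) ≤ (a*a) • ⟪y, y⟫_A := by
      set M : E := a • y - T y with hM
      have e2 : (a*a) • (⟪y, y⟫_A : A) - ⟪T y, T y⟫_A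
          = ⟪M, M⟫_A + (2:ℝ) • ⟪T y, a • y - T y⟫_A := by
        simp only [hM, map_sub, ContinuousLinearMap.map_smul_of_tower,
          CStarModule.inner_sub_left, CStarModule.inner_sub_right,
          CStarModule.inner_smul_left_real, CStarModule.inner_smul_right_real, hsymT,
          smul_sub, smul_smul]
        module
      have h0 : (0:A) ≤ (a*a) • (⟪y, y⟫_A : A) - ⟪T y, T y⟫_A := by
        rw [e2]
        exact add_nonneg CStarModule.inner_self_nonneg (smul_nonneg (by norm_num) hp)
      exact sub_nonneg.mp h0
    have hn1 : ‖T y‖^2 ≤ (a*‖y‖)^2 := by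
      rw [CStarModule.norm_sq_eq (A := A)]
      calc ‖(⟪T y, T y⟫_A : A)‖ ≤ ‖(a*a) • (⟪y, y⟫_A : A)‖ :=
            CStarAlgebra.norm_le_norm_of_nonneg_of_le CStarModule.inner_self_nonneg hT2
        _ = (a*a) * ‖(⟪y, y⟫_A : A)‖ := by
            rw [norm_smul, Real.norm_eq_abs, abs_of_pos (by positivity)]
        _ = (a*‖y‖)^2 := by
            rw [← CStarModule.norm_sq_eq]; ring
    nlinarith [norm_nonneg (T y), norm_nonneg y, mul_nonneg ha0.le (norm_nonneg y)]
  -- telescoping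
  intro x
  have tele : ∀ n, ∃ s : A, 0 ≤ s ∧ (⟪x, S (B x)⟫_A : A) = s + ⟪x, (iterOp S n) (B x)⟫_A := by
    intro n
    induction n with
    | zero => exact ⟨0, le_refl 0, by simp [iterOp]⟩
    | succ n ih =>
      obtain ⟨s, hs, he⟩ := ih
      refine ⟨s + ⟪(iterOp S n) x, B ((iterOp S n) x)⟫_A, add_nonneg hs (hB0 _), ?_⟩
      have h5 : (⟪x, (iterOp S n) ((iterOp S n) (B x))⟫_A : A)
          = ⟪(iterOp S n) x, B ((iterOp S n) x)⟫_A := by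
        rw [← hsymA n, hcommA n]
      have h4 : (⟪x, iterOp S (n+1) (B x)⟫_A : A)
          = ⟪x, (iterOp S n) (B x)⟫_A - ⟪(iterOp S n) x, B ((iterOp S n) x)⟫_A := by
        have : iterOp S (n+1) (B x)
            = (iterOp S n) (B x) - (iterOp S n) ((iterOp S n) (B x)) := by
          simp [iterOp]
        rw [this, CStarModule.inner_sub_right, h5]
      rw [he, h4]
      abel
  -- passage to the limit
  have hgbound : ∀ n, ‖(⟪x, iterOp S (n+1) (B x)⟫_A : A)‖ ≤ (‖x‖ * ‖B x‖) * bSeq n := by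
    intro n
    calc ‖(⟪x, iterOp S (n+1) (B x)⟫_A : A)‖ ≤ ‖x‖ * ‖iterOp S (n+1) (B x)‖ :=
          CStarModule.norm_inner_le E
      _ ≤ ‖x‖ * (bSeq n * ‖B x‖) := by
          refine mul_le_mul_of_nonneg_left (hnorm n (B x)) (norm_nonneg x)
      _ = (‖x‖ * ‖B x‖) * bSeq n := by ring
  have hg : Filter.Tendsto (fun n => (⟪x, iterOp S (n+1) (B x)⟫_A : A))
      Filter.atTop (nhds 0) := by
    refine squeeze_zero_norm hgbound ?_
    simpa using bSeq_tendsto.const_mul (‖x‖ * ‖B x‖)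
  have hf : Filter.Tendsto
      (fun n => (⟪x, S (B x)⟫_A : A) - ⟪x, iterOp S (n+1) (B x)⟫_A)
      Filter.atTop (nhds (⟪x, S (B x)⟫_A)) := by
    have hc : Filter.Tendsto (fun _ : ℕ => (⟪x, S (B x)⟫_A : A)) Filter.atTop
        (nhds (⟪x, S (B x)⟫_A)) := tendsto_const_nhds
    simpa using hc.sub hg
  refine ge_of_tendsto' hf (fun n => ?_)
  obtain ⟨s, hs, he⟩ := tele (n+1)
  have : (⟪x, S (B x)⟫_A : A) - ⟪x, iterOp S (n+1) (B x)⟫_A = s := by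
    rw [he]; abel
  rw [this]
  exact hs

end AuxiliaryLemmas

set_option maxHeartbeats 1600000 in
/-- For a selfadjoint regular operator `t`, the operator `F - i Q` is a
unitary element of the bounded adjointable operators, where `F` is the bounded transform
and `Q = (1+t²)^(-1/2)`. -/
theorem isUnitary_boundedTransform_sub_smul_sqrtResolvent
    (t : UnboundedOp A E) (ht : t.IsSelfAdjointRegular)
    (Q F : E →L[ℂ] E) (hQ : t.IsSqrtResolvent t Q) (hF : t.IsBoundedTransform Q F) :
    IsUnitaryB A (F - Complex.I • Q) := by
  obtain ⟨hQsym0, hQpos0, hres1, hres2⟩ := hQ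
  obtain ⟨hdense, _hclosed, ⟨hsym0, _hmax⟩, _, _⟩ := ht
  have hQsym : ∀ x y : E, (⟪Q x, y⟫_(Aᵐᵒᵖ) : Aᵐᵒᵖ) = ⟪x, Q y⟫_(Aᵐᵒᵖ) :=
    fun x y => MulOpposite.unop_injective (hQsym0 x y)
  have hQpos : ∀ x : E, (0 : Aᵐᵒᵖ) ≤ ⟪x, Q x⟫_(Aᵐᵒᵖ) :=
    fun x => MulOpposite.unop_nonneg.mp (hQpos0 x)
  have hsym : ∀ x (hx : x ∈ t.dom) y (hy : y ∈ t.dom),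
      (⟪t.app x hx, y⟫_(Aᵐᵒᵖ) : Aᵐᵒᵖ) = ⟪x, t.app y hy⟫_(Aᵐᵒᵖ) :=
    fun x hx y hy => MulOpposite.unop_injective (hsym0 x hx y hy)
  -- basic facts about `t.app`
  have app_congr : ∀ {x y : E} (hx : x ∈ t.dom) (hy : y ∈ t.dom), x = y →
      t.app x hx = t.app y hy := by
    intro x y hx hy e
    subst e; rfl
  have app_zero : ∀ (h : (0:E) ∈ t.dom), t.app 0 h = 0 := by
    intro h
    show t.toFun ⟨0, h⟩ = 0
    rw [show (⟨0, h⟩ : t.dom) = 0 from rfl, map_zero]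
  -- domain facts
  have hQdom : ∀ x : E, Q x ∈ t.dom := fun x => (hF x).choose
  have hFapp : ∀ x : E, F x = t.app (Q x) (hQdom x) := fun x => (hF x).choose_spec
  have hTRdom : ∀ x : E, t.app (Q (Q x)) (hQdom (Q x)) ∈ t.dom := fun x =>
    (hres1 x).choose_spec.choose
  have hTT : ∀ x : E, t.app (t.app (Q (Q x)) (hQdom (Q x))) (hTRdom x) = x - Q (Q x) :=
    fun x => eq_sub_of_add_eq (hres1 x).choose_spec.choose_spec
  -- `Q ∘ Q` commutes with `t`
  have Rcomm : ∀ (x) (hx : x ∈ t.dom),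
      Q (Q (t.app x hx)) = t.app (Q (Q x)) (hQdom (Q x)) := by
    intro x hx
    refine ext_inner (A := Aᵐᵒᵖ) (fun z => ?_)
    have lhs1 : (⟪z, Q (Q (t.app x hx))⟫_(Aᵐᵒᵖ) : Aᵐᵒᵖ)
        = ⟪t.app (Q (Q z)) (hQdom (Q z)), x⟫_(Aᵐᵒᵖ) := by
      calc (⟪z, Q (Q (t.app x hx))⟫_(Aᵐᵒᵖ) : Aᵐᵒᵖ) = ⟪Q z, Q (t.app x hx)⟫_(Aᵐᵒᵖ) := (hQsym z _).symm
        _ = ⟪Q (Q z), t.app x hx⟫_(Aᵐᵒᵖ) := (hQsym (Q z) _).symm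
        _ = ⟪t.app (Q (Q z)) (hQdom (Q z)), x⟫_(Aᵐᵒᵖ) := (hsym _ (hQdom (Q z)) x hx).symm
    rw [lhs1]
    symm
    have hzdec : t.app (t.app (Q (Q z)) (hQdom (Q z))) (hTRdom z) + Q (Q z) = z := by
      rw [hTT z]; abel
    calc (⟪z, t.app (Q (Q x)) (hQdom (Q x))⟫_(Aᵐᵒᵖ) : Aᵐᵒᵖ)
        = ⟪t.app (t.app (Q (Q z)) (hQdom (Q z))) (hTRdom z) + Q (Q z),
            t.app (Q (Q x)) (hQdom (Q x))⟫_(Aᵐᵒᵖ) := by rw [hzdec]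
      _ = ⟪t.app (t.app (Q (Q z)) (hQdom (Q z))) (hTRdom z),
            t.app (Q (Q x)) (hQdom (Q x))⟫_(Aᵐᵒᵖ)
          + ⟪Q (Q z), t.app (Q (Q x)) (hQdom (Q x))⟫_(Aᵐᵒᵖ) := by
            rw [CStarModule.inner_add_left]
      _ = ⟪t.app (Q (Q z)) (hQdom (Q z)),
            t.app (t.app (Q (Q x)) (hQdom (Q x))) (hTRdom x)⟫_(Aᵐᵒᵖ)
          + ⟪t.app (Q (Q z)) (hQdom (Q z)), Q (Q x)⟫_(Aᵐᵒᵖ) := by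
            rw [hsym _ (hTRdom z) _ (hTRdom x), hsym _ (hQdom (Q z)) _ (hQdom (Q x))]
      _ = ⟪t.app (Q (Q z)) (hQdom (Q z)), x - Q (Q x)⟫_(Aᵐᵒᵖ)
          + ⟪t.app (Q (Q z)) (hQdom (Q z)), Q (Q x)⟫_(Aᵐᵒᵖ) := by rw [hTT x]
      _ = ⟪t.app (Q (Q z)) (hQdom (Q z)), x⟫_(Aᵐᵒᵖ) := by
            rw [CStarModule.inner_sub_right]; abel
  -- relations between `F` and `Q`
  have hFQ : ∀ x : E, F (Q x) = t.app (Q (Q x)) (hQdom (Q x)) := fun x => hFapp (Q x)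
  have hFR : ∀ x : E, F (Q (Q x)) = Q (Q (F x)) := by
    intro x
    rw [hFapp x, Rcomm (Q x) (hQdom x)]
    exact hFapp (Q (Q x))
  have hcross : ∀ x y : E, (⟪F x, Q y⟫_(Aᵐᵒᵖ) : Aᵐᵒᵖ) = ⟪Q x, F y⟫_(Aᵐᵒᵖ) := by
    intro x y
    rw [hFapp x, hFapp y]
    exact hsym _ (hQdom x) _ (hQdom y)
  have hQF : ∀ x y : E, (⟪Q (F x), y⟫_(Aᵐᵒᵖ) : Aᵐᵒᵖ) = ⟪x, Q (F y)⟫_(Aᵐᵒᵖ) := by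
    intro x y
    calc (⟪Q (F x), y⟫_(Aᵐᵒᵖ) : Aᵐᵒᵖ) = ⟪F x, Q y⟫_(Aᵐᵒᵖ) := hQsym _ _
      _ = ⟪Q x, F y⟫_(Aᵐᵒᵖ) := hcross x y
      _ = ⟪x, Q (F y)⟫_(Aᵐᵒᵖ) := hQsym _ _
  -- a density principle
  have dense_ext : ∀ (f g : E → Aᵐᵒᵖ), Continuous f → Continuous g →
      (∀ y, y ∈ t.dom → f y = g y) → ∀ y, f y = g y := by
    intro f g hf hg h y
    have hsub : closure (t.dom : Set E) ⊆ {y : E | f y = g y} :=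
      closure_minimal (fun z hz => h z hz) (isClosed_eq hf hg)
    exact hsub (hdense y)
  have hFQsym : ∀ x y : E, (⟪F (Q x), y⟫_(Aᵐᵒᵖ) : Aᵐᵒᵖ) = ⟪x, F (Q y)⟫_(Aᵐᵒᵖ) := by
    intro x y
    refine dense_ext (fun y => (⟪F (Q x), y⟫_(Aᵐᵒᵖ) : Aᵐᵒᵖ)) (fun y => (⟪x, F (Q y)⟫_(Aᵐᵒᵖ) : Aᵐᵒᵖ))
      (by fun_prop) (by fun_prop) (fun z hz => ?_) y
    calc (⟪F (Q x), z⟫_(Aᵐᵒᵖ) : Aᵐᵒᵖ) = ⟪t.app (Q (Q x)) (hQdom (Q x)), z⟫_(Aᵐᵒᵖ) := by rw [hFQ x]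
      _ = ⟪Q (Q x), t.app z hz⟫_(Aᵐᵒᵖ) := hsym _ _ z hz
      _ = ⟪x, Q (Q (t.app z hz))⟫_(Aᵐᵒᵖ) := by rw [hQsym, hQsym]
      _ = ⟪x, t.app (Q (Q z)) (hQdom (Q z))⟫_(Aᵐᵒᵖ) := by rw [Rcomm z hz]
      _ = ⟪x, F (Q z)⟫_(Aᵐᵒᵖ) := by rw [← hFQ z]
  -- the commutator `K := QF - FQ`
  set K : E →L[ℂ] E := Q.comp F - F.comp Q with hKdef
  have hKapp : ∀ x : E, K x = Q (F x) - F (Q x) := fun x => rfl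
  have hKsym : ∀ x y : E, (⟪K x, y⟫_(Aᵐᵒᵖ) : Aᵐᵒᵖ) = ⟪x, K y⟫_(Aᵐᵒᵖ) := by
    intro x y
    rw [hKapp, hKapp, CStarModule.inner_sub_left, CStarModule.inner_sub_right,
      hQF x y, hFQsym x y]
  have hQK : ∀ x : E, Q (K x) = -(K (Q x)) := by
    intro x
    rw [hKapp, hKapp, map_sub, neg_sub, hFR x]
  have hKKcomm : ∀ x : E, Q (K (K x)) = K (K (Q x)) := by
    intro x
    rw [hQK (K x), hQK x, map_neg, neg_neg]
  -- `0 ≤ Q ≤ 1` as forms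
  have hR1 : ∀ x : E, (⟪x, Q (Q x)⟫_(Aᵐᵒᵖ) : Aᵐᵒᵖ) ≤ ⟪x, x⟫_(Aᵐᵒᵖ) := by
    intro x
    have hxdec : t.app (t.app (Q (Q x)) (hQdom (Q x))) (hTRdom x) + Q (Q x) = x := by
      rw [hTT x]; abel
    have e : (⟪x, x⟫_(Aᵐᵒᵖ) : Aᵐᵒᵖ) - ⟪x, Q (Q x)⟫_(Aᵐᵒᵖ)
        = ⟪t.app (t.app (Q (Q x)) (hQdom (Q x))) (hTRdom x),
            t.app (t.app (Q (Q x)) (hQdom (Q x))) (hTRdom x)⟫_(Aᵐᵒᵖ)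
          + ⟪t.app (Q (Q x)) (hQdom (Q x)), t.app (Q (Q x)) (hQdom (Q x))⟫_(Aᵐᵒᵖ) := by
      calc (⟪x, x⟫_(Aᵐᵒᵖ) : Aᵐᵒᵖ) - ⟪x, Q (Q x)⟫_(Aᵐᵒᵖ) = ⟪x, x - Q (Q x)⟫_(Aᵐᵒᵖ) := by
            rw [CStarModule.inner_sub_right]
        _ = ⟪x, t.app (t.app (Q (Q x)) (hQdom (Q x))) (hTRdom x)⟫_(Aᵐᵒᵖ) := by rw [hTT x]
        _ = ⟪t.app (t.app (Q (Q x)) (hQdom (Q x))) (hTRdom x) + Q (Q x),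
              t.app (t.app (Q (Q x)) (hQdom (Q x))) (hTRdom x)⟫_(Aᵐᵒᵖ) := by rw [hxdec]
        _ = ⟪t.app (t.app (Q (Q x)) (hQdom (Q x))) (hTRdom x),
              t.app (t.app (Q (Q x)) (hQdom (Q x))) (hTRdom x)⟫_(Aᵐᵒᵖ)
            + ⟪Q (Q x), t.app (t.app (Q (Q x)) (hQdom (Q x))) (hTRdom x)⟫_(Aᵐᵒᵖ) := by
              rw [CStarModule.inner_add_left]
        _ = _ := by
              rw [(hsym _ (hQdom (Q x)) _ (hTRdom x)).symm]
    have h0 : (0:Aᵐᵒᵖ) ≤ (⟪x, x⟫_(Aᵐᵒᵖ) : Aᵐᵒᵖ) - ⟪x, Q (Q x)⟫_(Aᵐᵒᵖ) := by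
      rw [e]
      exact add_nonneg CStarModule.inner_self_nonneg CStarModule.inner_self_nonneg
    exact sub_nonneg.mp h0
  have half_cancel : ∀ a b : Aᵐᵒᵖ, a + a ≤ b + b → a ≤ b := by
    intro a b h
    have h2 : (2:ℝ) • a ≤ (2:ℝ) • b := by rw [two_smul, two_smul]; exact h
    have h3 := smul_le_smul_of_nonneg_left h2 (by norm_num : (0:ℝ) ≤ 2⁻¹)
    rwa [smul_smul, smul_smul, (by norm_num : (2:ℝ)⁻¹ * 2 = 1), one_smul, one_smul] at h3
  have hQ1 : ∀ x : E, (⟪x, Q x⟫_(Aᵐᵒᵖ) : Aᵐᵒᵖ) ≤ ⟪x, x⟫_(Aᵐᵒᵖ) := by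
    intro x
    have e2 : (⟪x - Q x, x - Q x⟫_(Aᵐᵒᵖ) : Aᵐᵒᵖ)
        = (⟪x, x⟫_(Aᵐᵒᵖ) + ⟪x, Q (Q x)⟫_(Aᵐᵒᵖ)) - (⟪x, Q x⟫_(Aᵐᵒᵖ) + ⟪x, Q x⟫_(Aᵐᵒᵖ)) := by
      rw [CStarModule.inner_sub_left, CStarModule.inner_sub_right,
        CStarModule.inner_sub_right, hQsym x x, hQsym x (Q x)]
      abel
    have h0 : (0:Aᵐᵒᵖ) ≤ (⟪x - Q x, x - Q x⟫_(Aᵐᵒᵖ) : Aᵐᵒᵖ) := CStarModule.inner_self_nonneg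
    rw [e2] at h0
    have h1 : (⟪x, Q x⟫_(Aᵐᵒᵖ) : Aᵐᵒᵖ) + ⟪x, Q x⟫_(Aᵐᵒᵖ) ≤ ⟪x, x⟫_(Aᵐᵒᵖ) + ⟪x, Q (Q x)⟫_(Aᵐᵒᵖ) :=
      sub_nonneg.mp h0
    have h2 : (⟪x, x⟫_(Aᵐᵒᵖ) : Aᵐᵒᵖ) + ⟪x, Q (Q x)⟫_(Aᵐᵒᵖ) ≤ ⟪x, x⟫_(Aᵐᵒᵖ) + ⟪x, x⟫_(Aᵐᵒᵖ) :=
      add_le_add_right (hR1 x) _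
    exact half_cancel _ _ (h1.trans h2)
  -- the commutator vanishes
  have hB0 : ∀ x : E, (0:Aᵐᵒᵖ) ≤ ⟪x, (K.comp K) x⟫_(Aᵐᵒᵖ) := by
    intro x
    show (0:Aᵐᵒᵖ) ≤ ⟪x, K (K x)⟫_(Aᵐᵒᵖ)
    rw [← hKsym x (K x)]
    exact CStarModule.inner_self_nonneg
  have hprod : ∀ x : E, (0:Aᵐᵒᵖ) ≤ ⟪x, Q ((K.comp K) x)⟫_(Aᵐᵒᵖ) :=
    formPos_comp Q (K.comp K) hQsym hQpos hQ1 hB0 (fun x => hKKcomm x)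
  have hneg : ∀ x : E, (⟪x, Q (K (K x))⟫_(Aᵐᵒᵖ) : Aᵐᵒᵖ) ≤ 0 := by
    intro x
    rw [hQK (K x)]
    have e3 : (⟪x, -(K (Q (K x)))⟫_(Aᵐᵒᵖ) : Aᵐᵒᵖ) = -(⟪K x, Q (K x)⟫_(Aᵐᵒᵖ)) := by
      rw [show -(K (Q (K x))) = (0:E) - K (Q (K x)) by abel, CStarModule.inner_sub_right,
        ← hKsym x (Q (K x))]
      simp
    rw [e3]
    exact neg_nonpos_of_nonneg (hQpos (K x))
  have hzero : ∀ x : E, Q (K (K x)) = 0 := by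
    have hform : ∀ x : E, (⟪x, (Q.comp (K.comp K)) x⟫_(Aᵐᵒᵖ) : Aᵐᵒᵖ) = 0 := by
      intro x
      exact le_antisymm (hneg x) (hprod x)
    intro x
    exact eq_zero_of_form_zero (A := Aᵐᵒᵖ) (Q.comp (K.comp K)) hform x
  have hRinj : ∀ z : E, Q (Q z) = 0 → z = 0 := by
    intro z hz
    have e1 : t.app (Q (Q z)) (hQdom (Q z)) = 0 :=
      (app_congr _ (t.dom.zero_mem) hz).trans (app_zero _)
    have e2 : t.app (t.app (Q (Q z)) (hQdom (Q z))) (hTRdom z) = 0 :=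
      (app_congr _ (t.dom.zero_mem) e1).trans (app_zero _)
    have h3 := hTT z
    rw [e2, hz, sub_zero] at h3
    exact h3.symm
  have hKK0 : ∀ x : E, K (K x) = 0 := fun x =>
    hRinj (K (K x)) (by rw [hzero x, map_zero])
  have hK0 : ∀ x : E, K x = 0 := by
    intro x
    have h4 : (⟪K x, K x⟫_(Aᵐᵒᵖ) : Aᵐᵒᵖ) = 0 := by
      rw [hKsym x (K x), hKK0 x]
      simp
    exact CStarModule.inner_self.mp h4
  have hQFC : ∀ x : E, Q (F x) = F (Q x) := by
    intro x
    have := (hKapp x).symm.trans (hK0 x)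
    exact sub_eq_zero.mp this
  -- `F` agrees with `Q ∘ t` on the domain
  have hD : ∀ (y) (hy : y ∈ t.dom), F y = Q (t.app y hy) := by
    intro y hy
    have hQd : Q (F y - Q (t.app y hy)) = 0 := by
      rw [map_sub, hQFC y, Rcomm y hy, hFQ y, sub_self]
    have h5 := hRinj (F y - Q (t.app y hy)) (by rw [hQd, map_zero])
    exact sub_eq_zero.mp h5
  -- `F` is symmetric
  have hFsym : ∀ x y : E, (⟪F x, y⟫_(Aᵐᵒᵖ) : Aᵐᵒᵖ) = ⟪x, F y⟫_(Aᵐᵒᵖ) := by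
    intro x y
    refine dense_ext (fun y => (⟪F x, y⟫_(Aᵐᵒᵖ) : Aᵐᵒᵖ)) (fun y => (⟪x, F y⟫_(Aᵐᵒᵖ) : Aᵐᵒᵖ))
      (by fun_prop) (by fun_prop) (fun z hz => ?_) y
    calc (⟪F x, z⟫_(Aᵐᵒᵖ) : Aᵐᵒᵖ) = ⟪t.app (Q x) (hQdom x), z⟫_(Aᵐᵒᵖ) := by rw [hFapp x]
      _ = ⟪Q x, t.app z hz⟫_(Aᵐᵒᵖ) := hsym _ _ z hz
      _ = ⟪x, Q (t.app z hz)⟫_(Aᵐᵒᵖ) := hQsym _ _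
      _ = ⟪x, F z⟫_(Aᵐᵒᵖ) := by rw [← hD z hz]
  -- `F² = 1 - Q²`
  have hFF : ∀ x : E, F (F x) = x - Q (Q x) := by
    intro x
    have e : Q (F x) = t.app (Q (Q x)) (hQdom (Q x)) := (hQFC x).trans (hFQ x)
    calc F (F x) = t.app (Q (F x)) (hQdom (F x)) := hFapp (F x)
      _ = t.app (t.app (Q (Q x)) (hQdom (Q x))) (hTRdom x) := app_congr _ _ e
      _ = x - Q (Q x) := hTT x
  -- assemble the unitary
  refine ⟨F + Complex.I • Q, ?_, ?_, ?_⟩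
  · intro x y
    refine congrArg MulOpposite.unop ?_
    simp only [ContinuousLinearMap.sub_apply, ContinuousLinearMap.add_apply,
      ContinuousLinearMap.smul_apply, CStarModule.inner_sub_left,
      CStarModule.inner_add_right, CStarModule.inner_smul_left_complex,
      CStarModule.inner_smul_right_complex, Complex.star_def, Complex.conj_I]
    rw [hFsym x y, hQsym x y, neg_smul, sub_neg_eq_add]
  · apply ContinuousLinearMap.ext
    intro x
    show (F + Complex.I • Q) ((F - Complex.I • Q) x) = (1 : E →L[ℂ] E) x
    simp only [ContinuousLinearMap.sub_apply, ContinuousLinearMap.add_apply,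
      ContinuousLinearMap.smul_apply, map_sub, map_smul, ContinuousLinearMap.one_apply]
    rw [hFF x, hQFC x]
    simp only [smul_add, smul_sub, smul_smul, Complex.I_mul_I]
    module
  · apply ContinuousLinearMap.ext
    intro x
    show (F - Complex.I • Q) ((F + Complex.I • Q) x) = (1 : E →L[ℂ] E) x
    simp only [ContinuousLinearMap.sub_apply, ContinuousLinearMap.add_apply,
      ContinuousLinearMap.smul_apply, map_add, map_smul, ContinuousLinearMap.one_apply]
    rw [hFF x, hQFC x]
    simp only [smul_add, smul_sub, smul_smul, Complex.I_mul_I]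
    module

end RegularFredholm
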